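/- Let P : ℓ_p × ... × ℓ_p → 𝕂 be an (n_1,...,n_m)-homogeneous polynomial with coefficient expansion P(x^(1),...,x^(m)) = Σ_{|α^(1)|=n_1,...,|α^(m)|=n_m} c_{α^(1)...α^(m)}(P) (x^(1))^{α^(1)} ··· (x^(m))^{α^(m)}. Let ℕ = ℕ_1 ∪ ... ∪ ℕ_m be a disjoint union of infinite subsets and define the (n_1+...+n_m)-homogeneous polynomial Q : ℓ_p → 𝕂 by Q(z) = P((z_j)_{j∈ℕ_1}, ..., (z_j)_{j∈ℕ_m}), where (z_j)_{j∈ℕ_k} denotes z with coordinates outside ℕ_k set to zero. Then ‖Q‖ ≤ ‖P‖ and for every s > 0, Σ_{|β|=n_1+...+n_m} |c_β(Q)|^s = Σ_{|α^(1)|=n_1,...,|α^(m)|=n_m} |c_{α^(1)...α^(m)}(P)|^s. -/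

import Mathlib

/-- Substituting `m` variables of an `(n₁,…,n_m)`-homogeneous polynomial `P` on `(ℓ_p)^m`
along a decomposition `ℕ = ℕ₁ ∪ ⋯ ∪ ℕ_m` into disjoint infinite sets (enumerated by the
injections `e j`) yields an `(n₁+⋯+n_m)`-homogeneous polynomial `Q` on `ℓ_p` with
`‖Q‖ ≤ ‖P‖` and the same collection of absolute values of coefficients, so that
`∑_β |c_β(Q)|^s = ∑_α |c_{α⁽¹⁾…α⁽ᵐ⁾}(P)|^s` for every `s > 0`. -/
theorem stmt6 {𝕂 : Type*} [RCLike 𝕂] (m : ℕ) (hm : 0 < m)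
    (nn : Fin m → ℕ) (hnn : ∀ j, 0 < nn j)
    (p : ℝ) (hp : 1 ≤ p)
    (c : (Fin m → (ℕ →₀ ℕ)) →₀ 𝕂)
    (hdeg : ∀ α ∈ c.support, ∀ j, (α j).sum (fun _ t => t) = nn j)
    (e : Fin m → ℕ → ℕ) (hinj : ∀ j, Function.Injective (e j))
    (hdisj : ∀ j₁ j₂, j₁ ≠ j₂ → Disjoint (Set.range (e j₁)) (Set.range (e j₂)))
    (hcover : (⋃ j, Set.range (e j)) = Set.univ)
    (P : (Fin m → (ℕ → 𝕂)) → 𝕂)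
    (hP : ∀ x, P x = ∑ α ∈ c.support, c α * ∏ j, (α j).prod fun k t => x j k ^ t)
    (Q : (ℕ → 𝕂) → 𝕂)
    (hQ : ∀ z, Q z = P (fun j k => z (e j k))) :
    ∃ d : (ℕ →₀ ℕ) →₀ 𝕂,
      (∀ z, Q z = ∑ β ∈ d.support, d β * β.prod fun k t => z k ^ t) ∧
      (∀ β ∈ d.support, β.sum (fun _ t => t) = ∑ j, nn j) ∧
      (∀ B : ℝ, (∀ x : Fin m → lp (fun _ : ℕ => 𝕂) (ENNReal.ofReal p),
          (∀ j, ‖x j‖ ≤ 1) → ‖P (fun j => (x j : ℕ → 𝕂))‖ ≤ B) →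
        ∀ z : lp (fun _ : ℕ => 𝕂) (ENNReal.ofReal p), ‖z‖ ≤ 1 →
          ‖Q (z : ℕ → 𝕂)‖ ≤ B) ∧
      (∀ s : ℝ, 0 < s →
        ∑ β ∈ d.support, ‖d β‖ ^ s = ∑ α ∈ c.support, ‖c α‖ ^ s) := by
  classical
  set T : (Fin m → (ℕ →₀ ℕ)) → (ℕ →₀ ℕ) :=
    fun α => ∑ j, (α j).mapDomain (e j) with hT
  have hTapp : ∀ α j k, T α (e j k) = α j k := by
    intro α j k
    rw [hT]
    rw [Finsupp.finset_sum_apply]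
    rw [Finset.sum_eq_single j]
    · exact Finsupp.mapDomain_apply (hinj j) _ _
    · intro j' _ hj'
      apply Finsupp.mapDomain_notin_range
      intro hmem
      exact (Set.disjoint_left.1 (hdisj j' j hj')) hmem ⟨k, rfl⟩
    · intro h; exact absurd (Finset.mem_univ j) h
  have hTinj : Function.Injective T := by
    intro α α' h
    funext j
    ext k
    rw [← hTapp α j k, ← hTapp α' j k, h]
  set emb : (Fin m → (ℕ →₀ ℕ)) ↪ (ℕ →₀ ℕ) := ⟨T, hTinj⟩ with hemb
  refine ⟨c.embDomain emb, ?_, ?_, ?_, ?_⟩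
  · intro z
    rw [hQ, hP]
    rw [Finsupp.support_embDomain, Finset.sum_map]
    refine Finset.sum_congr rfl fun α hα => ?_
    rw [Finsupp.embDomain_apply_self]
    congr 1
    show ∏ j, (α j).prod (fun k t => z (e j k) ^ t) = (T α).prod fun k t => z k ^ t
    rw [hT]
    rw [← Finsupp.prod_finset_sum_index (fun a => pow_zero (z a))
      (fun a b₁ b₂ => pow_add (z a) b₁ b₂)]
    refine Finset.prod_congr rfl fun j _ => ?_
    rw [Finsupp.prod_mapDomain_index_inj (hinj j)]
  · intro β hβ
    rw [Finsupp.support_embDomain, Finset.mem_map] at hβ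
    obtain ⟨α, hα, rfl⟩ := hβ
    show (T α).sum (fun _ t => t) = ∑ j, nn j
    rw [hT, ← Finsupp.sum_finset_sum_index (fun _ => rfl) (fun _ _ _ => rfl)]
    refine Finset.sum_congr rfl fun j _ => ?_
    rw [Finsupp.sum_mapDomain_index_inj (hinj j)]
    exact hdeg α hα j
  · intro B hB z hz
    have hp0 : 0 < p := lt_of_lt_of_le one_pos hp
    have hpt : 0 < (ENNReal.ofReal p).toReal := by
      rwa [ENNReal.toReal_ofReal hp0.le]
    have hzsum : Summable fun i => ‖(z : ℕ → 𝕂) i‖ ^ (ENNReal.ofReal p).toReal :=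
      (lp.memℓp z).summable hpt
    have hxsum : ∀ j, Summable fun k =>
        ‖(z : ℕ → 𝕂) (e j k)‖ ^ (ENNReal.ofReal p).toReal := fun j =>
      hzsum.comp_injective (hinj j)
    set x : Fin m → lp (fun _ : ℕ => 𝕂) (ENNReal.ofReal p) :=
      fun j => ⟨fun k => (z : ℕ → 𝕂) (e j k), memℓp_gen (hxsum j)⟩ with hx
    have hxn : ∀ j, ‖x j‖ ≤ 1 := by
      intro j
      have h1 : ‖x j‖ ^ (ENNReal.ofReal p).toReal ≤ ‖z‖ ^ (ENNReal.ofReal p).toReal := by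
        rw [lp.norm_rpow_eq_tsum hpt, lp.norm_rpow_eq_tsum hpt]
        exact Summable.tsum_le_tsum_of_inj (e j) (hinj j)
          (fun c _ => Real.rpow_nonneg (norm_nonneg _) _)
          (fun k => le_of_eq rfl) (hxsum j) hzsum
      have h2 : ‖x j‖ ≤ ‖z‖ :=
        (Real.rpow_le_rpow_iff (lp.norm_nonneg' (x j)) (lp.norm_nonneg' z) hpt).1 h1
      exact h2.trans hz
    have hQP : Q (z : ℕ → 𝕂) = P (fun j => (x j : ℕ → 𝕂)) := by
      rw [hQ]
    rw [hQP]
    exact hB x hxn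
  · intro s _
    rw [Finsupp.support_embDomain, Finset.sum_map]
    refine Finset.sum_congr rfl fun α _ => ?_
    rw [Finsupp.embDomain_apply_self]
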